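/- There exists a universal constant C > 0 such that for every integer m ≥ 1, every positive integer n, every k ≥ 2, and every probability vector P on k letters, E[(2n·V_{n,k,P})^m] ≤ (C·m·(k-1))^m. -/

import Mathlib

open Real Finset MeasureTheory

noncomputable def klBin (q p : ℝ) : ℝ :=
  q * Real.log (q / p) + (1 - q) * Real.log ((1 - q) / (1 - p))

noncomputable def klVec {k : ℕ} (q p : Fin k → ℝ) : ℝ :=
  ∑ i, q i * Real.log (q i / p i)

noncomputable def binomPMF (n : ℕ) (p : ℝ) (i : ℕ) : ℝ :=
  (n.choose i : ℝ) * p ^ i * (1 - p) ^ (n - i)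

def multSupport (n k : ℕ) : Finset (Fin k → ℕ) :=
  (Fintype.piFinset fun _ => Finset.range (n + 1)).filter fun x => ∑ i, x i = n

noncomputable def multPMF (n : ℕ) {k : ℕ} (p : Fin k → ℝ) (x : Fin k → ℕ) : ℝ :=
  ((n.factorial : ℝ) / ∏ i, ((x i).factorial : ℝ)) * ∏ i, p i ^ x i

noncomputable def gfun (x lam : ℝ) : ℝ := 2 * (x * Real.log (x / lam) - x + lam)

lemma gfun_nonneg {x lam : ℝ} (hlam : 0 < lam) (hx : 0 ≤ x) : 0 ≤ gfun x lam := by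
  rcases eq_or_lt_of_le hx with h | h
  · simp [gfun, ← h]; positivity
  · have h1 : Real.log (lam / x) ≤ lam / x - 1 :=
      Real.log_le_sub_one_of_pos (by positivity)
    have h2 : Real.log (lam / x) = - Real.log (x / lam) := by
      rw [← Real.log_inv]; congr 1; field_simp
    have : 1 - lam / x ≤ Real.log (x / lam) := by rw [h2] at h1; linarith
    have := mul_le_mul_of_nonneg_left this (le_of_lt h)
    have hxx : x * (1 - lam / x) = x - lam := by field_simp
    rw [hxx] at this
    unfold gfun; nlinarith

lemma gfun_zero (lam : ℝ) : gfun 0 lam = 2 * lam := by simp [gfun]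

lemma gfun_le_zero_pt {x lam : ℝ} (hlam : 0 < lam) (hx : 0 ≤ x) (hxl : x ≤ lam) :
    gfun x lam ≤ gfun 0 lam := by
  rw [gfun_zero]
  have hlog : Real.log (x / lam) ≤ 0 := by
    apply Real.log_nonpos (by positivity) (by rw [div_le_one hlam]; exact hxl)
  have : x * Real.log (x / lam) ≤ 0 := mul_nonpos_of_nonneg_of_nonpos hx hlog
  unfold gfun; nlinarith

-- monotonicity via derivatives
private noncomputable def phi (lam : ℝ) : ℝ → ℝ := fun t => t * Real.log t - t * Real.log lam - t

private lemma phi_hasDeriv {lam t : ℝ} (ht : 0 < t) :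
    HasDerivAt (phi lam) (Real.log t - Real.log lam) t := by
  have h1 : HasDerivAt (fun x : ℝ => x * Real.log x) (Real.log t + 1) t :=
    Real.hasDerivAt_mul_log (ne_of_gt ht)
  have h2 : HasDerivAt (fun x : ℝ => x * Real.log lam) (Real.log lam) t := by
    simpa using (hasDerivAt_id t).mul_const (Real.log lam)
  have h3 := (h1.sub h2).sub (hasDerivAt_id t)
  exact h3.congr_deriv (by ring)

private lemma gfun_eq_phi {x lam : ℝ} (hx : 0 < x) (hlam : 0 < lam) :
    gfun x lam = 2 * (phi lam x + lam) := by
  unfold gfun phi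
  rw [Real.log_div (ne_of_gt hx) (ne_of_gt hlam)]; ring

lemma gfun_anti {x y lam : ℝ} (hlam : 0 < lam) (hx : 0 < x) (hxy : x ≤ y) (hyl : y ≤ lam) :
    gfun y lam ≤ gfun x lam := by
  have hy : 0 < y := lt_of_lt_of_le hx hxy
  rw [gfun_eq_phi hx hlam, gfun_eq_phi hy hlam]
  have : phi lam y ≤ phi lam x := by
    have hanti : AntitoneOn (phi lam) (Set.Icc x y) := by
      apply antitoneOn_of_deriv_nonpos (convex_Icc x y)
      · apply ContinuousOn.congr (f := phi lam) ?_ (fun t ht => rfl)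
        intro t ht
        have ht0 : 0 < t := lt_of_lt_of_le hx ht.1
        exact ((phi_hasDeriv ht0).continuousAt).continuousWithinAt
      · intro t ht
        rw [interior_Icc] at ht
        have ht0 : 0 < t := lt_trans hx ht.1
        exact ((phi_hasDeriv ht0).differentiableAt).differentiableWithinAt
      · intro t ht
        rw [interior_Icc] at ht
        have ht0 : 0 < t := lt_trans hx ht.1
        rw [(phi_hasDeriv ht0).deriv]
        have : t ≤ lam := le_trans (le_of_lt ht.2) hyl
        have := Real.log_le_log (by positivity) this
        linarith
    exact hanti (Set.left_mem_Icc.mpr hxy) (Set.right_mem_Icc.mpr hxy) hxy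
  linarith

lemma gfun_mono {x y lam : ℝ} (hlam : 0 < lam) (hx : lam ≤ x) (hxy : x ≤ y) :
    gfun x lam ≤ gfun y lam := by
  have hx0 : 0 < x := lt_of_lt_of_le hlam hx
  have hy0 : 0 < y := lt_of_lt_of_le hx0 hxy
  rw [gfun_eq_phi hx0 hlam, gfun_eq_phi hy0 hlam]
  have : phi lam x ≤ phi lam y := by
    have hmono : MonotoneOn (phi lam) (Set.Icc x y) := by
      apply monotoneOn_of_deriv_nonneg (convex_Icc x y)
      · apply ContinuousOn.congr (f := phi lam) ?_ (fun t ht => rfl)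
        intro t ht
        have ht0 : 0 < t := lt_of_lt_of_le hx0 ht.1
        exact ((phi_hasDeriv ht0).continuousAt).continuousWithinAt
      · intro t ht
        rw [interior_Icc] at ht
        have ht0 : 0 < t := lt_trans hx0 ht.1
        exact ((phi_hasDeriv ht0).differentiableAt).differentiableWithinAt
      · intro t ht
        rw [interior_Icc] at ht
        have ht0 : 0 < t := lt_trans hx0 ht.1
        rw [(phi_hasDeriv ht0).deriv]
        have : lam ≤ t := le_trans hx (le_of_lt ht.1)
        have := Real.log_le_log hlam this
        linarith
    exact hmono (Set.left_mem_Icc.mpr hxy) (Set.right_mem_Icc.mpr hxy) hxy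
  linarith

lemma self_le_exp (x : ℝ) : x ≤ Real.exp x :=
  le_trans (by linarith) (Real.add_one_le_exp x)

lemma pow_le_exp_aux {v : ℝ} (hv : 0 ≤ v) {j m : ℕ} (hm : 1 ≤ m) (hj : j ≤ m) :
    v ^ j ≤ (4 * m) ^ j * Real.exp (v / 4) := by
  have hmR : (1:ℝ) ≤ (m:ℝ) := by exact_mod_cast hm
  have hm0 : (0:ℝ) < 4 * m := by linarith
  have h1 : v ≤ 4 * m * Real.exp (v / (4 * m)) := by
    have h := self_le_exp (v / (4 * m))
    calc v = (4 * m) * (v / (4 * m)) := by field_simp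
    _ ≤ (4 * m) * Real.exp (v / (4 * m)) :=
        mul_le_mul_of_nonneg_left h (le_of_lt hm0)
  calc v ^ j ≤ (4 * m * Real.exp (v / (4 * m))) ^ j := pow_le_pow_left₀ hv h1 j
  _ = (4 * m) ^ j * (Real.exp (v / (4 * m))) ^ j := by rw [mul_pow]
  _ ≤ (4 * m) ^ j * Real.exp (v / 4) := by
      apply mul_le_mul_of_nonneg_left _ (by positivity)
      rw [← Real.exp_nat_mul]
      apply Real.exp_le_exp.mpr
      have hjR : (j : ℝ) ≤ (m : ℝ) := Nat.cast_le.mpr hj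
      have : (j:ℝ) * (v / (4 * m)) ≤ (m:ℝ) * (v / (4 * m)) := by
        apply mul_le_mul_of_nonneg_right hjR (by positivity)
      calc (j:ℝ) * (v / (4 * m)) ≤ (m:ℝ) * (v / (4 * m)) := this
      _ = v / 4 := by field_simp

lemma pow_sub_pow_le' {a b : ℝ} (ha : 0 ≤ a) (hab : a ≤ b) (m : ℕ) :
    b ^ m - a ^ m ≤ m * b ^ (m - 1) * (b - a) := by
  have hb : 0 ≤ b := le_trans ha hab
  have key := geom_sum₂_mul b a m
  rw [← key]
  apply mul_le_mul_of_nonneg_right _ (by linarith)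
  calc ∑ i ∈ Finset.range m, b ^ i * a ^ (m - 1 - i)
      ≤ ∑ i ∈ Finset.range m, b ^ (m-1) := by
        apply Finset.sum_le_sum
        intro i hi
        rw [Finset.mem_range] at hi
        calc b ^ i * a ^ (m - 1 - i) ≤ b ^ i * b ^ (m - 1 - i) := by
              apply mul_le_mul_of_nonneg_left (pow_le_pow_left₀ ha hab _) (by positivity)
        _ = b ^ (m - 1) := by rw [← pow_add]; congr 1; omega
  _ = m * b ^ (m-1) := by rw [Finset.sum_const, Finset.card_range, nsmul_eq_mul]

lemma layercake {m : ℕ} (hm : 1 ≤ m) (N : ℕ) (w v : ℕ → ℝ)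
    (hw : ∀ j, j ≤ N → 0 ≤ w j) (hv0 : 0 ≤ v 0)
    (hmono : ∀ i, i + 1 ≤ N → v i ≤ v (i + 1))
    (htail : ∀ i, i ≤ N → ∑ j ∈ Finset.Icc i N, w j ≤ Real.exp (-(v i) / 2)) :
    ∑ j ∈ Finset.range (N + 1), w j * v j ^ m ≤ 2 * (4 * m) ^ m := by
  -- nonneg and monotone facts
  have hvchain : ∀ i j, i ≤ j → j ≤ N → v i ≤ v j := by
    intro i j hij hjN
    induction j with
    | zero => simp_all
    | succ j ih =>
      rcases Nat.lt_or_ge i (j+1) with h | h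
      · exact le_trans (ih (by omega) (by omega)) (hmono j (by omega))
      · have : i = j + 1 := by omega
        subst this; rfl
  have hvnn : ∀ j, j ≤ N → 0 ≤ v j := fun j hj => le_trans hv0 (hvchain 0 j (by omega) hj)
  -- telescoping decomposition of v j ^ m
  have hdecomp : ∀ j, v j ^ m = v 0 ^ m + ∑ i ∈ Finset.range j, (v (i+1) ^ m - v i ^ m) := by
    intro j
    rw [Finset.sum_range_sub (fun i => v i ^ m)]
    ring
  calc ∑ j ∈ Finset.range (N + 1), w j * v j ^ m
      = (∑ j ∈ Finset.range (N+1), w j) * v 0 ^ m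
        + ∑ j ∈ Finset.range (N+1), ∑ i ∈ Finset.range j, w j * (v (i+1) ^ m - v i ^ m) := by
        rw [Finset.sum_mul]
        rw [← Finset.sum_add_distrib]
        apply Finset.sum_congr rfl
        intro j _
        rw [← Finset.mul_sum, hdecomp j]
        ring
  _ ≤ Real.exp (-(v 0)/2) * v 0 ^ m
        + ∑ i ∈ Finset.range N, (v (i+1) ^ m - v i ^ m) * Real.exp (-(v (i+1))/2) := by
      apply add_le_add
      · apply mul_le_mul_of_nonneg_right _ (by positivity)
        have := htail 0 (by omega)
        calc ∑ j ∈ Finset.range (N+1), w j = ∑ j ∈ Finset.Icc 0 N, w j := by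
              congr 1
              rw [← Finset.Ico_add_one_right_eq_Icc, Finset.range_eq_Ico]
        _ ≤ Real.exp (-(v 0)/2) := this
      · -- swap the double sum
        have hswap : ∑ j ∈ Finset.range (N+1), ∑ i ∈ Finset.range j, w j * (v (i+1) ^ m - v i ^ m)
            = ∑ i ∈ Finset.range N, (v (i+1) ^ m - v i ^ m) * ∑ j ∈ Finset.Icc (i+1) N, w j := by
          have h := Finset.sum_Ico_Ico_comm' 0 (N+1) (fun i j => w j * (v (i+1) ^ m - v i ^ m))
          calc ∑ j ∈ Finset.range (N+1), ∑ i ∈ Finset.range j, w j * (v (i+1) ^ m - v i ^ m)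
              = ∑ j ∈ Finset.Ico 0 (N+1), ∑ i ∈ Finset.Ico 0 j, w j * (v (i+1) ^ m - v i ^ m) := by
                simp only [Finset.range_eq_Ico]
          _ = ∑ i ∈ Finset.Ico 0 (N+1), ∑ j ∈ Finset.Ico (i+1) (N+1), w j * (v (i+1) ^ m - v i ^ m) :=
                h.symm
          _ = ∑ i ∈ Finset.range (N+1), (v (i+1) ^ m - v i ^ m) * ∑ j ∈ Finset.Icc (i+1) N, w j := by
                rw [← Finset.range_eq_Ico]
                apply Finset.sum_congr rfl
                intro i _
                rw [Finset.Ico_add_one_right_eq_Icc, Finset.mul_sum]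
                apply Finset.sum_congr rfl; intro j _; ring
          _ = ∑ i ∈ Finset.range N, (v (i+1) ^ m - v i ^ m) * ∑ j ∈ Finset.Icc (i+1) N, w j := by
                rw [Finset.sum_range_succ]
                have he : Finset.Icc (N+1) N = ∅ := by rw [Finset.Icc_eq_empty]; omega
                rw [he]; simp
        rw [hswap]
        apply Finset.sum_le_sum
        intro i hi
        rw [Finset.mem_range] at hi
        have hdnn : 0 ≤ v (i+1) ^ m - v i ^ m := by
          have h1 := pow_le_pow_left₀ (hvnn i (by omega)) (hmono i (by omega)) m
          linarith
        exact mul_le_mul_of_nonneg_left (htail (i+1) (by omega)) hdnn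
  _ ≤ (4*m)^m + ∑ i ∈ Finset.range N, (4*m:ℝ)^(m-1) * m * 4 * (Real.exp (-(v i)/4) - Real.exp (-(v (i+1))/4)) := by
      apply add_le_add
      · -- head bound
        have h1 : v 0 ^ m ≤ (4*m)^m * Real.exp (v 0 / 4) := pow_le_exp_aux hv0 hm (le_refl m)
        calc Real.exp (-(v 0)/2) * v 0 ^ m ≤ Real.exp (-(v 0)/2) * ((4*m)^m * Real.exp (v 0/4)) := by
              apply mul_le_mul_of_nonneg_left h1 (le_of_lt (Real.exp_pos _))
        _ = (4*m)^m * Real.exp (v 0/4 - v 0/2) := by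
              rw [show (v 0/4 - v 0/2 : ℝ) = v 0/4 + (-(v 0)/2) by ring, Real.exp_add]; ring
        _ ≤ (4*m)^m * 1 := by
            apply mul_le_mul_of_nonneg_left _ (by positivity)
            rw [← Real.exp_zero]
            apply Real.exp_le_exp.mpr; linarith
        _ = (4*m)^m := by ring
      · apply Finset.sum_le_sum
        intro i hi
        rw [Finset.mem_range] at hi
        have hvi : 0 ≤ v i := hvnn i (by omega)
        have hvi1 : 0 ≤ v (i+1) := hvnn (i+1) (by omega)
        have hmon := hmono i (by omega)
        have hd : v (i+1) ^ m - v i ^ m ≤ m * v (i+1) ^ (m-1) * (v (i+1) - v i) :=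
          pow_sub_pow_le' hvi hmon m
        have hdnn : 0 ≤ v (i+1) ^ m - v i ^ m := by
          have := pow_le_pow_left₀ hvi hmon m; linarith
        have hp : v (i+1) ^ (m-1) ≤ (4*m)^(m-1) * Real.exp (v (i+1) / 4) :=
          pow_le_exp_aux hvi1 hm (by omega)
        have hexpineq : (v (i+1) - v i) * Real.exp (-(v (i+1))/4)
            ≤ 4 * (Real.exp (-(v i)/4) - Real.exp (-(v (i+1))/4)) := by
          have key : (v (i+1) - v i)/4 + 1 ≤ Real.exp ((v (i+1) - v i)/4) :=
            Real.add_one_le_exp _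
          have hE : Real.exp ((v (i+1) - v i)/4) * Real.exp (-(v (i+1))/4) = Real.exp (-(v i)/4) := by
            rw [← Real.exp_add]; congr 1; ring
          have hEpos := Real.exp_pos (-(v (i+1))/4)
          nlinarith
        calc (v (i+1) ^ m - v i ^ m) * Real.exp (-(v (i+1))/2)
            ≤ (m * v (i+1) ^ (m-1) * (v (i+1) - v i)) * Real.exp (-(v (i+1))/2) := by
              apply mul_le_mul_of_nonneg_right hd (le_of_lt (Real.exp_pos _))
        _ ≤ (m * ((4*m)^(m-1) * Real.exp (v (i+1)/4)) * (v (i+1) - v i)) * Real.exp (-(v (i+1))/2) := by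
              apply mul_le_mul_of_nonneg_right _ (le_of_lt (Real.exp_pos _))
              apply mul_le_mul_of_nonneg_right _ (by linarith)
              apply mul_le_mul_of_nonneg_left hp (by positivity)
        _ = (4*m:ℝ)^(m-1) * m * ((v (i+1) - v i) * Real.exp (-(v (i+1))/4)) := by
              rw [show (-(v (i+1)):ℝ)/4 = v (i+1)/4 + (-(v (i+1))/2) by ring, Real.exp_add]
              ring
        _ ≤ (4*m:ℝ)^(m-1) * m * (4 * (Real.exp (-(v i)/4) - Real.exp (-(v (i+1))/4))) := by
              apply mul_le_mul_of_nonneg_left hexpineq (by positivity)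
        _ = (4*m:ℝ)^(m-1) * m * 4 * (Real.exp (-(v i)/4) - Real.exp (-(v (i+1))/4)) := by ring
  _ ≤ 2 * (4*m)^m := by
      have htel : ∑ i ∈ Finset.range N, (Real.exp (-(v i)/4) - Real.exp (-(v (i+1))/4))
          = Real.exp (-(v 0)/4) - Real.exp (-(v N)/4) := by
        have := Finset.sum_range_sub' (fun i => Real.exp (-(v i)/4)) N
        simpa using this
      rw [← Finset.mul_sum, htel]
      have h1 : Real.exp (-(v 0)/4) ≤ 1 := by
        rw [← Real.exp_zero]; apply Real.exp_le_exp.mpr; linarith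
      have h2 : 0 < Real.exp (-(v N)/4) := Real.exp_pos _
      have h3 : (4*m:ℝ)^(m-1) * m * 4 = (4*m:ℝ)^m := by
        have : (4*m:ℝ)^m = (4*m:ℝ)^(m-1) * (4*m) := by
          rw [← pow_succ]; congr 1; omega
        rw [this]; ring
      rw [h3]
      have h4 : (0:ℝ) ≤ (4*m:ℝ)^m := by positivity
      nlinarith

lemma binomPMF_nonneg {n : ℕ} {p : ℝ} (hp0 : 0 ≤ p) (hp1 : p ≤ 1) (i : ℕ) :
    0 ≤ binomPMF n p i := by
  unfold binomPMF
  have : (0:ℝ) ≤ 1 - p := by linarith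
  positivity

lemma binom_mgf (n : ℕ) (p r : ℝ) :
    ∑ j ∈ Finset.range (n+1), binomPMF n p j * r ^ j = (p * r + (1 - p)) ^ n := by
  rw [add_pow]
  apply Finset.sum_congr rfl
  intro j _
  unfold binomPMF
  rw [mul_pow]
  ring

lemma chernoff_upper {n : ℕ} {p : ℝ} (hn : 1 ≤ n) (hp0 : 0 < p) (hp1 : p ≤ 1) {a : ℕ}
    (ha : (n:ℝ) * p ≤ a) (han : a ≤ n) :
    ∑ j ∈ Finset.Icc a n, binomPMF n p j ≤ Real.exp (-(gfun a ((n:ℝ) * p)) / 2) := by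
  set lam : ℝ := (n:ℝ) * p with hlamdef
  have hnR : (1:ℝ) ≤ (n:ℝ) := by exact_mod_cast hn
  have hlam : 0 < lam := by rw [hlamdef]; positivity
  have ha0 : 0 < (a:ℝ) := lt_of_lt_of_le hlam ha
  set θ := Real.log ((a:ℝ) / lam) with hθdef
  have hθ : 0 ≤ θ := Real.log_nonneg ((one_le_div hlam).mpr ha)
  have hexpθ : Real.exp θ = (a:ℝ) / lam := Real.exp_log (by positivity)
  have step1 : ∑ j ∈ Finset.Icc a n, binomPMF n p j
      ≤ ∑ j ∈ Finset.range (n+1), binomPMF n p j * Real.exp θ ^ j * Real.exp (-θ * a) := by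
    have hsub : Finset.Icc a n ⊆ Finset.range (n+1) := by
      intro j hj; rw [Finset.mem_Icc] at hj; rw [Finset.mem_range]; omega
    calc ∑ j ∈ Finset.Icc a n, binomPMF n p j
        ≤ ∑ j ∈ Finset.Icc a n, binomPMF n p j * Real.exp θ ^ j * Real.exp (-θ * a) := by
          apply Finset.sum_le_sum
          intro j hj
          rw [Finset.mem_Icc] at hj
          have h1 : Real.exp θ ^ j * Real.exp (-θ * a) = Real.exp (θ * j - θ * a) := by
            rw [← Real.exp_nat_mul, ← Real.exp_add]; congr 1; ring
          have h2 : (1:ℝ) ≤ Real.exp θ ^ j * Real.exp (-θ * a) := by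
            rw [h1, ← Real.exp_zero]
            apply Real.exp_le_exp.mpr
            have : (a:ℝ) ≤ (j:ℝ) := by exact_mod_cast hj.1
            nlinarith
          have hP := binomPMF_nonneg (le_of_lt hp0) hp1 (n := n) j
          nlinarith
    _ ≤ ∑ j ∈ Finset.range (n+1), binomPMF n p j * Real.exp θ ^ j * Real.exp (-θ * a) := by
          apply Finset.sum_le_sum_of_subset_of_nonneg hsub
          intro j _ _
          have hP := binomPMF_nonneg (le_of_lt hp0) hp1 (n := n) j
          positivity
  have step2 : ∑ j ∈ Finset.range (n+1), binomPMF n p j * Real.exp θ ^ j * Real.exp (-θ * a)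
      = Real.exp (-θ * a) * (p * Real.exp θ + (1 - p)) ^ n := by
    rw [← binom_mgf n p (Real.exp θ), Finset.mul_sum]
    apply Finset.sum_congr rfl; intro j _; ring
  have step3 : (p * Real.exp θ + (1 - p)) ^ n ≤ Real.exp (lam * (Real.exp θ - 1)) := by
    have hbase0 : 0 ≤ p * Real.exp θ + (1 - p) := by
      have := Real.exp_pos θ; nlinarith
    have hbase : p * Real.exp θ + (1 - p) ≤ Real.exp (p * (Real.exp θ - 1)) := by
      have := Real.add_one_le_exp (p * (Real.exp θ - 1))
      linarith
    calc (p * Real.exp θ + (1 - p)) ^ n ≤ (Real.exp (p * (Real.exp θ - 1))) ^ n :=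
          pow_le_pow_left₀ hbase0 hbase n
    _ = Real.exp ((n:ℝ) * (p * (Real.exp θ - 1))) := by rw [← Real.exp_nat_mul]
    _ = Real.exp (lam * (Real.exp θ - 1)) := by rw [hlamdef]; ring_nf
  have step4 : Real.exp (-θ * a) * Real.exp (lam * (Real.exp θ - 1))
      = Real.exp (-(gfun a lam) / 2) := by
    rw [← Real.exp_add]
    congr 1
    rw [hexpθ, hθdef]
    unfold gfun
    have : lam * ((a:ℝ)/lam - 1) = a - lam := by field_simp
    rw [this]
    ring
  calc ∑ j ∈ Finset.Icc a n, binomPMF n p j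
      ≤ Real.exp (-θ * a) * (p * Real.exp θ + (1 - p)) ^ n := by rw [← step2]; exact step1
  _ ≤ Real.exp (-θ * a) * Real.exp (lam * (Real.exp θ - 1)) :=
      mul_le_mul_of_nonneg_left step3 (le_of_lt (Real.exp_pos _))
  _ = Real.exp (-(gfun a lam) / 2) := step4

lemma chernoff_lower {n : ℕ} {p : ℝ} (hn : 1 ≤ n) (hp0 : 0 < p) (hp1 : p ≤ 1) {b : ℕ}
    (hb : (b:ℝ) ≤ (n:ℝ) * p) :
    ∑ j ∈ Finset.range (b+1), binomPMF n p j ≤ Real.exp (-(gfun b ((n:ℝ) * p)) / 2) := by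
  set lam : ℝ := (n:ℝ) * p with hlamdef
  have hnR : (1:ℝ) ≤ (n:ℝ) := by exact_mod_cast hn
  have hlam : 0 < lam := by rw [hlamdef]; positivity
  have hbn : b ≤ n := by
    have h1 : (b:ℝ) ≤ (n:ℝ) := le_trans hb (by nlinarith)
    exact_mod_cast h1
  rcases Nat.eq_zero_or_pos b with hb0 | hbpos
  · subst hb0
    have : ∑ j ∈ Finset.range 1, binomPMF n p j = (1 - p) ^ n := by
      simp [binomPMF]
    rw [this]
    have h0 : gfun (0:ℕ) lam = 2 * lam := by
      have : ((0:ℕ):ℝ) = (0:ℝ) := by norm_num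
      rw [this, gfun_zero]
    rw [h0]
    have hbase0 : (0:ℝ) ≤ 1 - p := by linarith
    have hbase : 1 - p ≤ Real.exp (-p) := by
      have := Real.add_one_le_exp (-p); linarith
    calc (1 - p) ^ n ≤ (Real.exp (-p)) ^ n := pow_le_pow_left₀ hbase0 hbase n
    _ = Real.exp ((n:ℝ) * (-p)) := by rw [← Real.exp_nat_mul]
    _ = Real.exp (-(2 * lam) / 2) := by congr 1; rw [hlamdef]; ring
  · have hb0R : 0 < (b:ℝ) := by exact_mod_cast hbpos
    set θ := Real.log (lam / (b:ℝ)) with hθdef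
    have hθ : 0 ≤ θ := Real.log_nonneg ((one_le_div hb0R).mpr hb)
    have hexpθ : Real.exp (-θ) = (b:ℝ) / lam := by
      rw [Real.exp_neg, hθdef, Real.exp_log (by positivity)]
      rw [inv_div]
    have step1 : ∑ j ∈ Finset.range (b+1), binomPMF n p j
        ≤ ∑ j ∈ Finset.range (n+1), binomPMF n p j * Real.exp (-θ) ^ j * Real.exp (θ * b) := by
      have hsub : Finset.range (b+1) ⊆ Finset.range (n+1) := by
        intro j hj; rw [Finset.mem_range] at *; omega
      calc ∑ j ∈ Finset.range (b+1), binomPMF n p j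
          ≤ ∑ j ∈ Finset.range (b+1), binomPMF n p j * Real.exp (-θ) ^ j * Real.exp (θ * b) := by
            apply Finset.sum_le_sum
            intro j hj
            rw [Finset.mem_range] at hj
            have h1 : Real.exp (-θ) ^ j * Real.exp (θ * b) = Real.exp (θ * b - θ * j) := by
              rw [← Real.exp_nat_mul, ← Real.exp_add]; congr 1; ring
            have h2 : (1:ℝ) ≤ Real.exp (-θ) ^ j * Real.exp (θ * b) := by
              rw [h1, ← Real.exp_zero]
              apply Real.exp_le_exp.mpr
              have : (j:ℝ) ≤ (b:ℝ) := by exact_mod_cast Nat.lt_succ_iff.mp hj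
              nlinarith
            have hP := binomPMF_nonneg (le_of_lt hp0) hp1 (n := n) j
            nlinarith
      _ ≤ ∑ j ∈ Finset.range (n+1), binomPMF n p j * Real.exp (-θ) ^ j * Real.exp (θ * b) := by
            apply Finset.sum_le_sum_of_subset_of_nonneg hsub
            intro j _ _
            have hP := binomPMF_nonneg (le_of_lt hp0) hp1 (n := n) j
            positivity
    have step2 : ∑ j ∈ Finset.range (n+1), binomPMF n p j * Real.exp (-θ) ^ j * Real.exp (θ * b)
        = Real.exp (θ * b) * (p * Real.exp (-θ) + (1 - p)) ^ n := by
      rw [← binom_mgf n p (Real.exp (-θ)), Finset.mul_sum]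
      apply Finset.sum_congr rfl; intro j _; ring
    have step3 : (p * Real.exp (-θ) + (1 - p)) ^ n ≤ Real.exp (lam * (Real.exp (-θ) - 1)) := by
      have hbase0 : 0 ≤ p * Real.exp (-θ) + (1 - p) := by
        have := Real.exp_pos (-θ); nlinarith
      have hbase : p * Real.exp (-θ) + (1 - p) ≤ Real.exp (p * (Real.exp (-θ) - 1)) := by
        have := Real.add_one_le_exp (p * (Real.exp (-θ) - 1))
        linarith
      calc (p * Real.exp (-θ) + (1 - p)) ^ n ≤ (Real.exp (p * (Real.exp (-θ) - 1))) ^ n :=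
            pow_le_pow_left₀ hbase0 hbase n
      _ = Real.exp ((n:ℝ) * (p * (Real.exp (-θ) - 1))) := by rw [← Real.exp_nat_mul]
      _ = Real.exp (lam * (Real.exp (-θ) - 1)) := by rw [hlamdef]; ring_nf
    have step4 : Real.exp (θ * b) * Real.exp (lam * (Real.exp (-θ) - 1))
        = Real.exp (-(gfun b lam) / 2) := by
      rw [← Real.exp_add]
      congr 1
      rw [hexpθ, hθdef]
      unfold gfun
      have h1 : lam * ((b:ℝ)/lam - 1) = b - lam := by field_simp
      rw [h1]
      have h2 : Real.log (lam / (b:ℝ)) = - Real.log ((b:ℝ) / lam) := by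
        rw [← Real.log_inv]; congr 1; rw [inv_div]
      rw [h2]
      ring
    calc ∑ j ∈ Finset.range (b+1), binomPMF n p j
        ≤ Real.exp (θ * b) * (p * Real.exp (-θ) + (1 - p)) ^ n := by rw [← step2]; exact step1
    _ ≤ Real.exp (θ * b) * Real.exp (lam * (Real.exp (-θ) - 1)) :=
        mul_le_mul_of_nonneg_left step3 (le_of_lt (Real.exp_pos _))
    _ = Real.exp (-(gfun b lam) / 2) := step4

lemma binom_moment {m n : ℕ} (hm : 1 ≤ m) (hn : 1 ≤ n) {p : ℝ} (hp0 : 0 < p) (hp1 : p ≤ 1) :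
    ∑ j ∈ Finset.range (n+1), binomPMF n p j * gfun (j:ℝ) ((n:ℝ)*p) ^ m
      ≤ ((16 * m : ℝ)) ^ m := by
  set lam : ℝ := (n:ℝ) * p with hlamdef
  have hnR : (1:ℝ) ≤ (n:ℝ) := by exact_mod_cast hn
  have hlam : 0 < lam := by rw [hlamdef]; positivity
  have hlamn : lam ≤ (n:ℝ) := by rw [hlamdef]; nlinarith
  set a : ℕ := ⌊lam⌋₊ with hadef
  have haR : (a:ℝ) ≤ lam := Nat.floor_le (le_of_lt hlam)
  have haR2 : lam < (a:ℝ) + 1 := Nat.lt_floor_add_one lam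
  have han : a ≤ n := by
    have : (a:ℝ) ≤ (n:ℝ) := le_trans haR hlamn
    exact_mod_cast this
  have hsplit : ∑ j ∈ Finset.range (n+1), binomPMF n p j * gfun (j:ℝ) lam ^ m
      = (∑ j ∈ Finset.range (a+1), binomPMF n p j * gfun (j:ℝ) lam ^ m)
        + ∑ j ∈ Finset.Ico (a+1) (n+1), binomPMF n p j * gfun (j:ℝ) lam ^ m := by
    simp only [Finset.range_eq_Ico]
    rw [← Finset.sum_Ico_consecutive _ (by omega : 0 ≤ a + 1) (by omega : a + 1 ≤ n + 1)]
  -- Lower part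
  have hL : ∑ j ∈ Finset.range (a+1), binomPMF n p j * gfun (j:ℝ) lam ^ m
      ≤ 2 * (4 * m) ^ m := by
    have hrefl := Finset.sum_range_reflect
      (fun j => binomPMF n p j * gfun (j:ℝ) lam ^ m) (a+1)
    rw [← hrefl]
    have hsimp : ∀ t ∈ Finset.range (a+1),
        binomPMF n p (a + 1 - 1 - t) * gfun ((a + 1 - 1 - t : ℕ):ℝ) lam ^ m
          = binomPMF n p (a - t) * gfun ((a - t : ℕ):ℝ) lam ^ m := by
      intro t _
      have : a + 1 - 1 - t = a - t := by omega
      rw [this]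
    rw [Finset.sum_congr rfl hsimp]
    apply layercake hm a (fun t => binomPMF n p (a - t)) (fun t => gfun ((a - t : ℕ):ℝ) lam)
    · intro j _; exact binomPMF_nonneg (le_of_lt hp0) hp1 _
    · exact gfun_nonneg hlam (by positivity)
    · intro i hi
      have hcast : ((a - i:ℕ):ℝ) = ((a - (i+1):ℕ):ℝ) + 1 := by
        have h : a - i = (a - (i+1)) + 1 := by omega
        rw [h]; push_cast; ring
      set b : ℕ := a - (i+1) with hbdef
      rcases Nat.eq_zero_or_pos b with hb0 | hbpos
      · rw [hcast, hb0]
        simp only [Nat.cast_zero]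
        have h1 : (1:ℝ) ≤ lam := by
          have : 1 ≤ a := by omega
          have : (1:ℝ) ≤ (a:ℝ) := by exact_mod_cast this
          linarith
        have := gfun_le_zero_pt hlam (by norm_num : (0:ℝ) ≤ 0 + 1) (by linarith)
        simpa using this
      · rw [hcast]
        apply gfun_anti hlam (by exact_mod_cast hbpos) (by linarith)
        have : b + 1 ≤ a := by omega
        have : ((b:ℝ) + 1) ≤ (a:ℝ) := by exact_mod_cast this
        linarith
    · intro i hi
      have hre : ∑ j ∈ Finset.Icc i a, binomPMF n p (a - j)
          = ∑ t ∈ Finset.range (a - i + 1), binomPMF n p t := by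
        apply Finset.sum_nbij' (fun j => a - j) (fun t => a - t)
        · intro j hj; rw [Finset.mem_Icc] at hj; rw [Finset.mem_range]; omega
        · intro t ht; rw [Finset.mem_range] at ht; rw [Finset.mem_Icc]; omega
        · intro j hj; rw [Finset.mem_Icc] at hj; omega
        · intro t ht; rw [Finset.mem_range] at ht; omega
        · intro j _; rfl
      rw [hre]
      have hble : ((a - i : ℕ):ℝ) ≤ lam := by
        have h1 : a - i ≤ a := by omega
        have : ((a - i : ℕ):ℝ) ≤ (a:ℝ) := by exact_mod_cast h1
        linarith
      exact chernoff_lower hn hp0 hp1 hble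
  -- Upper part
  have hU : ∑ j ∈ Finset.Ico (a+1) (n+1), binomPMF n p j * gfun (j:ℝ) lam ^ m
      ≤ 2 * (4 * m) ^ m := by
    rcases Nat.lt_or_ge a n with haln | hage
    · have hre := Finset.sum_Ico_eq_sum_range
        (f := fun j => binomPMF n p j * gfun (j:ℝ) lam ^ m) (m := a+1) (n := n+1)
      rw [hre]
      have hNn : n + 1 - (a + 1) = (n - a - 1) + 1 := by omega
      rw [hNn]
      apply layercake hm (n - a - 1) (fun t => binomPMF n p (a + 1 + t))
        (fun t => gfun ((a + 1 + t : ℕ):ℝ) lam)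
      · intro j _; exact binomPMF_nonneg (le_of_lt hp0) hp1 _
      · exact gfun_nonneg hlam (by positivity)
      · intro i hi
        apply gfun_mono hlam
        · push_cast; linarith
        · push_cast; linarith
      · intro i hi
        have hre2 : ∑ j ∈ Finset.Icc i (n - a - 1), binomPMF n p (a + 1 + j)
            = ∑ t ∈ Finset.Icc (a + 1 + i) n, binomPMF n p t := by
          apply Finset.sum_nbij' (fun j => a + 1 + j) (fun t => t - (a + 1))
          · intro j hj; rw [Finset.mem_Icc] at *; omega
          · intro t ht; rw [Finset.mem_Icc] at *; omega
          · intro j hj; rw [Finset.mem_Icc] at hj; omega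
          · intro t ht; rw [Finset.mem_Icc] at ht; omega
          · intro j _; rfl
        rw [hre2]
        have hup : lam ≤ ((a + 1 + i : ℕ):ℝ) := by push_cast; linarith
        exact chernoff_upper hn hp0 hp1 hup (by omega)
    · have : Finset.Ico (a+1) (n+1) = ∅ := by
        rw [Finset.Ico_eq_empty]; omega
      rw [this, Finset.sum_empty]
      positivity
  rw [hsplit]
  have hfin : (4:ℝ) * (4 * m) ^ m ≤ (16 * m) ^ m := by
    have h1 : ((16:ℝ) * m) ^ m = 4 ^ m * (4 * m) ^ m := by
      rw [← mul_pow]; congr 1; ring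
    rw [h1]
    have h2 : (4:ℝ) ≤ 4 ^ m := by
      calc (4:ℝ) = 4 ^ 1 := by norm_num
      _ ≤ 4 ^ m := pow_le_pow_right₀ (by norm_num) hm
    have h3 : (0:ℝ) ≤ (4 * m) ^ m := by positivity
    nlinarith
  linarith

lemma minkowski_two {σ : Type*} (S : Finset σ) (w F G : σ → ℝ)
    (hw : ∀ x ∈ S, 0 ≤ w x) (hF : ∀ x ∈ S, 0 ≤ F x) (hG : ∀ x ∈ S, 0 ≤ G x)
    {m : ℕ} (hm : 1 ≤ m) {A B : ℝ} (hA : 0 ≤ A) (hB : 0 ≤ B)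
    (h1 : ∑ x ∈ S, w x * F x ^ m ≤ A ^ m) (h2 : ∑ x ∈ S, w x * G x ^ m ≤ B ^ m) :
    ∑ x ∈ S, w x * (F x + G x) ^ m ≤ (A + B) ^ m := by
  have hm0 : m ≠ 0 := by omega
  have hmR : (1:ℝ) ≤ (m:ℝ) := by exact_mod_cast hm
  set p : ℝ := (m : ℝ) with hpdef
  set F' : σ → ℝ := fun x => w x ^ (1/p) * F x with hF'def
  set G' : σ → ℝ := fun x => w x ^ (1/p) * G x with hG'def
  have hwpow : ∀ x ∈ S, (w x ^ (1/p)) ^ m = w x := by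
    intro x hx
    rw [hpdef, one_div, ← Real.rpow_natCast (w x ^ ((m:ℝ))⁻¹) m, ← Real.rpow_mul (hw x hx)]
    rw [inv_mul_cancel₀ (by positivity : (m:ℝ) ≠ 0), Real.rpow_one]
  have hFm : ∑ x ∈ S, F' x ^ m = ∑ x ∈ S, w x * F x ^ m := by
    apply Finset.sum_congr rfl
    intro x hx
    rw [hF'def]
    simp only
    rw [mul_pow, hwpow x hx]
  have hGm : ∑ x ∈ S, G' x ^ m = ∑ x ∈ S, w x * G x ^ m := by
    apply Finset.sum_congr rfl
    intro x hx
    rw [hG'def]; simp only; rw [mul_pow, hwpow x hx]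
  have hFGm : ∑ x ∈ S, (F' x + G' x) ^ m = ∑ x ∈ S, w x * (F x + G x) ^ m := by
    apply Finset.sum_congr rfl
    intro x hx
    rw [hF'def, hG'def]; simp only
    rw [← mul_add, mul_pow, hwpow x hx]
  -- convert to rpow statement
  have hrw : ∀ (f : σ → ℝ), (∀ x ∈ S, 0 ≤ f x) →
      ∑ x ∈ S, f x ^ p = ∑ x ∈ S, f x ^ m := by
    intro f hf
    apply Finset.sum_congr rfl
    intro x hx
    rw [hpdef, Real.rpow_natCast]
  have hF'nn : ∀ x ∈ S, 0 ≤ F' x := by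
    intro x hx; rw [hF'def]; simp only
    apply mul_nonneg (Real.rpow_nonneg (hw x hx) _) (hF x hx)
  have hG'nn : ∀ x ∈ S, 0 ≤ G' x := by
    intro x hx; rw [hG'def]; simp only
    apply mul_nonneg (Real.rpow_nonneg (hw x hx) _) (hG x hx)
  have hmink := Real.Lp_add_le_of_nonneg (s := S) (f := F') (g := G') (p := p) hmR hF'nn hG'nn
  rw [hrw _ hF'nn, hrw _ hG'nn, hrw _ (fun x hx => add_nonneg (hF'nn x hx) (hG'nn x hx))] at hmink
  rw [hFm, hGm, hFGm] at hmink
  have hXnn : 0 ≤ ∑ x ∈ S, w x * (F x + G x) ^ m := by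
    apply Finset.sum_nonneg
    intro x hx
    exact mul_nonneg (hw x hx) (pow_nonneg (add_nonneg (hF x hx) (hG x hx)) m)
  have hstep : (∑ x ∈ S, w x * (F x + G x) ^ m) ^ (1/p) ≤ A + B := by
    have hAm : (∑ x ∈ S, w x * F x ^ m) ^ (1/p) ≤ A := by
      calc (∑ x ∈ S, w x * F x ^ m) ^ (1/p) ≤ (A ^ m) ^ (1/p) := by
            apply Real.rpow_le_rpow ?_ h1 (by positivity)
            apply Finset.sum_nonneg
            intro x hx
            exact mul_nonneg (hw x hx) (pow_nonneg (hF x hx) m)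
      _ = A := by rw [hpdef, one_div, Real.pow_rpow_inv_natCast hA hm0]
    have hBm : (∑ x ∈ S, w x * G x ^ m) ^ (1/p) ≤ B := by
      calc (∑ x ∈ S, w x * G x ^ m) ^ (1/p) ≤ (B ^ m) ^ (1/p) := by
            apply Real.rpow_le_rpow ?_ h2 (by positivity)
            apply Finset.sum_nonneg
            intro x hx
            exact mul_nonneg (hw x hx) (pow_nonneg (hG x hx) m)
      _ = B := by rw [hpdef, one_div, Real.pow_rpow_inv_natCast hB hm0]
    exact le_trans hmink (add_le_add hAm hBm)
  calc ∑ x ∈ S, w x * (F x + G x) ^ m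
      = ((∑ x ∈ S, w x * (F x + G x) ^ m) ^ (1/p)) ^ m := by
        rw [hpdef, one_div, Real.rpow_inv_natCast_pow hXnn hm0]
  _ ≤ (A + B) ^ m := pow_le_pow_left₀ (Real.rpow_nonneg hXnn _) hstep m

lemma minkowski_sum {σ ι : Type*} (T : Finset ι) (S : Finset σ) (w : σ → ℝ)
    (hw : ∀ x ∈ S, 0 ≤ w x) (f : ι → σ → ℝ) (hf : ∀ i ∈ T, ∀ x ∈ S, 0 ≤ f i x)
    {m : ℕ} (hm : 1 ≤ m) (a : ι → ℝ) (ha : ∀ i ∈ T, 0 ≤ a i)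
    (h : ∀ i ∈ T, ∑ x ∈ S, w x * f i x ^ m ≤ a i ^ m) :
    ∑ x ∈ S, w x * (∑ i ∈ T, f i x) ^ m ≤ (∑ i ∈ T, a i) ^ m := by
  induction T using Finset.cons_induction with
  | empty =>
    simp only [Finset.sum_empty]
    rw [zero_pow (by omega)]
    apply Finset.sum_nonpos
    intro x hx
    simp
  | cons i T hi ih =>
    simp only [Finset.sum_cons]
    apply minkowski_two S w (f i) (fun x => ∑ j ∈ T, f j x) hw
      (fun x hx => hf i (Finset.mem_cons_self i T) x hx)
      (fun x hx => Finset.sum_nonneg fun j hj => hf j (Finset.mem_cons_of_mem hj) x hx)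
      hm (ha i (Finset.mem_cons_self i T))
      (Finset.sum_nonneg fun j hj => ha j (Finset.mem_cons_of_mem hj))
      (h i (Finset.mem_cons_self i T))
    apply ih
    · intro j hj x hx; exact hf j (Finset.mem_cons_of_mem hj) x hx
    · intro j hj; exact ha j (Finset.mem_cons_of_mem hj)
    · intro j hj; exact h j (Finset.mem_cons_of_mem hj)

lemma multSupport_eq (n k : ℕ) : multSupport n k = Finset.piAntidiag Finset.univ n := by
  ext x
  simp only [multSupport, Finset.mem_filter, Fintype.mem_piFinset, Finset.mem_range,
    Finset.mem_piAntidiag, Finset.mem_univ, implies_true, and_true]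
  constructor
  · rintro ⟨-, h⟩; exact h
  · intro h
    refine ⟨fun t => ?_, h⟩
    have h2 : x t ≤ ∑ j, x j :=
      Finset.single_le_sum (f := x) (fun j _ => Nat.zero_le (x j)) (Finset.mem_univ t)
    have h3 : ∑ j, x j = n := h
    omega

lemma multinomial_cast_eq {α : Type*} (s : Finset α) (g : α → ℕ) :
    (Nat.multinomial s g : ℝ) = ((∑ t ∈ s, g t).factorial : ℝ) / ∏ t ∈ s, ((g t).factorial : ℝ) := by
  have hspec := Nat.multinomial_spec s g
  have hprod : (0:ℝ) < ∏ t ∈ s, ((g t).factorial : ℝ) := by positivity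
  rw [eq_div_iff (ne_of_gt hprod), mul_comm, ← Nat.cast_prod, ← Nat.cast_mul, hspec]

lemma marginal {k : ℕ} (n : ℕ) (p : Fin k → ℝ) (hp1 : ∑ i, p i = 1) (i : Fin k) (F : ℕ → ℝ) :
    ∑ x ∈ multSupport n k, multPMF n p x * F (x i)
      = ∑ j ∈ Finset.range (n+1), binomPMF n (p i) j * F j := by
  classical
  have hi : i ∉ Finset.univ.erase i := Finset.notMem_erase i _
  have huniv : (Finset.univ : Finset (Fin k)) = Finset.cons i (Finset.univ.erase i) hi := by
    rw [Finset.cons_eq_insert, Finset.insert_erase (Finset.mem_univ i)]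
  have hsum_erase : ∑ t ∈ Finset.univ.erase i, p t = 1 - p i := by
    rw [← Finset.add_sum_erase _ p (Finset.mem_univ i)] at hp1
    linarith
  rw [multSupport_eq]
  rw [show Finset.piAntidiag (Finset.univ : Finset (Fin k)) n
      = Finset.piAntidiag (Finset.cons i (Finset.univ.erase i) hi) n by rw [← huniv]]
  rw [Finset.piAntidiag_cons, Finset.sum_disjiUnion]
  rw [← Finset.Nat.sum_antidiagonal_eq_sum_range_succ_mk
    (fun q => binomPMF n (p i) q.1 * F q.1)]
  apply Finset.sum_congr rfl
  intro q hq
  rw [Finset.HasAntidiagonal.mem_antidiagonal] at hq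
  rw [Finset.sum_map]
  have hq1n : q.1 ≤ n := by omega
  have key : ∀ g ∈ Finset.piAntidiag (Finset.univ.erase i) q.2,
      multPMF n p (addRightEmbedding (fun t => if t = i then q.1 else 0) g)
        * F ((addRightEmbedding (fun t => if t = i then q.1 else 0) g) i)
      = ((n.choose q.1 : ℝ) * p i ^ q.1 * F q.1)
        * ((Nat.multinomial (Finset.univ.erase i) g : ℝ) * ∏ t ∈ Finset.univ.erase i, p t ^ g t) := by
    intro g hg
    rw [Finset.mem_piAntidiag] at hg
    obtain ⟨hgsum, hgsupp⟩ := hg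
    have hgi : g i = 0 := by
      by_contra h
      exact hi (hgsupp i h)
    set y : Fin k → ℕ := addRightEmbedding (fun t => if t = i then q.1 else 0) g with hydef
    have hyval : ∀ t, y t = g t + if t = i then q.1 else 0 := by
      intro t; rw [hydef]; rfl
    have hyi : y i = q.1 := by rw [hyval i, hgi, if_pos rfl]; omega
    have hyt : ∀ t ∈ Finset.univ.erase i, y t = g t := by
      intro t ht
      rw [Finset.mem_erase] at ht
      rw [hyval t, if_neg ht.1, Nat.add_zero]
    have hprodfact : ∏ t, ((y t).factorial : ℝ)
        = (q.1.factorial : ℝ) * ∏ t ∈ Finset.univ.erase i, ((g t).factorial : ℝ) := by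
      rw [← Finset.mul_prod_erase _ (fun t => ((y t).factorial : ℝ)) (Finset.mem_univ i), hyi]
      congr 1
      apply Finset.prod_congr rfl
      intro t ht; rw [hyt t ht]
    have hprodp : ∏ t, p t ^ y t
        = p i ^ q.1 * ∏ t ∈ Finset.univ.erase i, p t ^ g t := by
      rw [← Finset.mul_prod_erase _ (fun t => p t ^ y t) (Finset.mem_univ i), hyi]
      congr 1
      apply Finset.prod_congr rfl
      intro t ht; rw [hyt t ht]
    have hnfact : (n.factorial : ℝ) = (n.choose q.1 : ℝ) * (q.1.factorial : ℝ) * (q.2.factorial : ℝ) := by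
      have := Nat.choose_mul_factorial_mul_factorial hq1n
      have h2 : n - q.1 = q.2 := by omega
      rw [h2] at this
      exact_mod_cast this.symm
    have hmult : (Nat.multinomial (Finset.univ.erase i) g : ℝ)
        = (q.2.factorial : ℝ) / ∏ t ∈ Finset.univ.erase i, ((g t).factorial : ℝ) := by
      rw [multinomial_cast_eq, hgsum]
    unfold multPMF
    rw [hprodfact, hprodp, hyi, hnfact, hmult]
    have hf1 : (q.1.factorial : ℝ) ≠ 0 := by positivity
    have hf2 : (0:ℝ) < ∏ t ∈ Finset.univ.erase i, ((g t).factorial : ℝ) := by positivity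
    field_simp
  rw [Finset.sum_congr rfl key]
  rw [← Finset.mul_sum]
  have hsum2 : ∑ g ∈ Finset.piAntidiag (Finset.univ.erase i) q.2,
      ((Nat.multinomial (Finset.univ.erase i) g : ℝ) * ∏ t ∈ Finset.univ.erase i, p t ^ g t)
      = (1 - p i) ^ q.2 := by
    rw [← hsum_erase, ← Finset.sum_pow_eq_sum_piAntidiag]
  rw [hsum2]
  unfold binomPMF
  have h2 : n - q.1 = q.2 := by omega
  rw [h2]
  ring

lemma multPMF_nonneg {n k : ℕ} {p : Fin k → ℝ} (hp : ∀ i, 0 ≤ p i) (x : Fin k → ℕ) :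
    0 ≤ multPMF n p x := by
  unfold multPMF
  apply mul_nonneg
  · positivity
  · exact Finset.prod_nonneg fun i _ => pow_nonneg (hp i) _

lemma pointwise_eq {k n : ℕ} (hn : 1 ≤ n) (p : Fin k → ℝ) (hp0 : ∀ i, 0 ≤ p i)
    (hp1 : ∑ i, p i = 1) (x : Fin k → ℕ) (hx : ∑ i, x i = n)
    (hjunk : ∀ i, p i = 0 → x i = 0) :
    2 * (n:ℝ) * klVec (fun i => (x i : ℝ)/n) p
      = ∑ i, (if p i = 0 then 0 else gfun (x i : ℝ) ((n:ℝ) * p i)) := by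
  have hnR : (0:ℝ) < n := by
    have : (1:ℝ) ≤ (n:ℝ) := by exact_mod_cast hn
    linarith
  unfold klVec
  rw [Finset.mul_sum]
  have hterm : ∀ i : Fin k, 2 * (n:ℝ) * ((x i : ℝ)/n * Real.log (((x i : ℝ)/n) / p i))
      = (if p i = 0 then 0 else gfun (x i:ℝ) ((n:ℝ)*p i)) - (2*(n:ℝ)*p i - 2*(x i:ℝ)) := by
    intro i
    by_cases hpi : p i = 0
    · rw [if_pos hpi, hpi, hjunk i hpi]
      simp
    · rw [if_neg hpi]
      have hpin : 0 < p i := lt_of_le_of_ne (hp0 i) (Ne.symm hpi)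
      have harg : ((x i : ℝ)/n)/p i = (x i : ℝ)/((n:ℝ)*p i) := by rw [div_div]
      unfold gfun
      rw [harg]
      set L := Real.log ((x i:ℝ)/((n:ℝ)*p i)) with hLdef
      field_simp
      ring
  rw [Finset.sum_congr rfl (fun i _ => hterm i), Finset.sum_sub_distrib]
  have hzero : ∑ i, (2*(n:ℝ)*p i - 2*(x i:ℝ)) = 0 := by
    rw [Finset.sum_sub_distrib, ← Finset.mul_sum, hp1]
    have hxc : ∑ i, (2:ℝ) * (x i : ℝ) = 2 * (n:ℝ) := by
      rw [← Finset.mul_sum]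
      congr 1
      rw [← hx]
      push_cast
      rfl
    rw [hxc]
    ring
  rw [hzero, sub_zero]

theorem moment_bounds :
    ∃ C : ℝ, 0 < C ∧ ∀ (m n k : ℕ), 1 ≤ m → 1 ≤ n → 2 ≤ k →
      ∀ p : Fin k → ℝ, (∀ i, 0 ≤ p i) → (∑ i, p i = 1) →
        ∑ x ∈ multSupport n k, multPMF n p x *
            (2 * (n : ℝ) * klVec (fun i => (x i : ℝ) / n) p) ^ m ≤
          (C * m * ((k : ℝ) - 1)) ^ m := by
  refine ⟨32, by norm_num, ?_⟩
  intro m n k hm hn hk p hp0 hp1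
  classical
  set f : Fin k → (Fin k → ℕ) → ℝ :=
    fun i x => if p i = 0 then 0 else gfun (x i : ℝ) ((n:ℝ) * p i) with hfdef
  have hnR : (1:ℝ) ≤ (n:ℝ) := by exact_mod_cast hn
  have hstep1 : ∑ x ∈ multSupport n k, multPMF n p x *
        (2 * (n : ℝ) * klVec (fun i => (x i : ℝ) / n) p) ^ m
      = ∑ x ∈ multSupport n k, multPMF n p x * (∑ i, f i x) ^ m := by
    apply Finset.sum_congr rfl
    intro x hx
    have hxsum : ∑ i, x i = n := (Finset.mem_filter.mp hx).2
    by_cases hjunk : ∀ i, p i = 0 → x i = 0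
    · rw [pointwise_eq hn p hp0 hp1 x hxsum hjunk]
    · push_neg at hjunk
      obtain ⟨i, hpi, hxi⟩ := hjunk
      have hz : multPMF n p x = 0 := by
        unfold multPMF
        have : ∏ t, p t ^ x t = 0 :=
          Finset.prod_eq_zero (Finset.mem_univ i) (by rw [hpi]; exact zero_pow hxi)
        rw [this, mul_zero]
      rw [hz, zero_mul, zero_mul]
  rw [hstep1]
  have hmink := minkowski_sum Finset.univ (multSupport n k) (multPMF n p)
    (fun x _ => multPMF_nonneg hp0 x) f
    (fun i _ x _ => by
      rw [hfdef]
      simp only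
      split
      · exact le_refl 0
      · apply gfun_nonneg
        · have hpin : 0 < p i := lt_of_le_of_ne (hp0 i) (Ne.symm (by assumption))
          nlinarith
        · positivity)
    hm (fun _ => 16 * (m:ℝ))
    (fun i _ => by positivity)
    ?_
  · calc ∑ x ∈ multSupport n k, multPMF n p x * (∑ i, f i x) ^ m
        ≤ (∑ _i : Fin k, 16 * (m:ℝ)) ^ m := hmink
    _ = ((k:ℝ) * (16 * m)) ^ m := by
        rw [Finset.sum_const, Finset.card_univ, Fintype.card_fin, nsmul_eq_mul]
    _ ≤ (32 * m * ((k:ℝ) - 1)) ^ m := by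
        apply pow_le_pow_left₀ (by positivity)
        have hkR : (2:ℝ) ≤ (k:ℝ) := by exact_mod_cast hk
        have hmR : (1:ℝ) ≤ (m:ℝ) := by exact_mod_cast hm
        nlinarith
  · intro i _
    by_cases hpi : p i = 0
    · have : ∀ x ∈ multSupport n k, multPMF n p x * f i x ^ m = 0 := by
        intro x _
        rw [hfdef]
        simp only [if_pos hpi]
        rw [zero_pow (by omega), mul_zero]
      rw [Finset.sum_congr rfl this, Finset.sum_const, smul_zero]
      positivity
    · have hpin : 0 < p i := lt_of_le_of_ne (hp0 i) (Ne.symm hpi)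
      have hpile : p i ≤ 1 := by
        have h2 := Finset.single_le_sum (f := p) (fun j _ => hp0 j) (Finset.mem_univ i)
        rw [hp1] at h2
        exact h2
      have heq : ∑ x ∈ multSupport n k, multPMF n p x * f i x ^ m
          = ∑ j ∈ Finset.range (n+1), binomPMF n (p i) j * gfun (j:ℝ) ((n:ℝ) * p i) ^ m := by
        have := marginal n p hp1 i (fun j => gfun (j:ℝ) ((n:ℝ) * p i) ^ m)
        rw [← this]
        apply Finset.sum_congr rfl
        intro x _
        rw [hfdef]
        simp only [if_neg hpi]
      rw [heq]
      exact binom_moment hm hn hpin hpile
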